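/- If there exist environments e and j with πᵉ₁ + πʲ₀ > 1, then the width of the cross-environment bounds b⁺ − b⁻ is strictly less than s2 − s1 (the width of the Manski bound), assuming s1 < s2. -/
import Mathlib

/-- Improvement over Manski bounds: if some pair of environments satisfies
πᵉ₁ + πʲ₀ > 1, then b⁺ − b⁻ < s2 − s1. -/
theorem stmt_4 {ι : Type*} [Fintype ι] [Nonempty ι]
    (π1 π0 μ1 μ0 : ι → ℝ) (s1 s2 : ℝ) (hs : s1 < s2)
    (hπ1 : ∀ e, 0 ≤ π1 e ∧ π1 e ≤ 1) (hπ0 : ∀ e, 0 ≤ π0 e ∧ π0 e ≤ 1)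
    (hexists : ∃ e j, 1 < π1 e + π0 j) :
    (Finset.univ : Finset (ι × ι)).inf' Finset.univ_nonempty (fun p =>
        π1 p.1 * μ1 p.1 + (1 - π1 p.1) * s2
          - π0 p.2 * μ0 p.2 - (1 - π0 p.2) * s1)
      - (Finset.univ : Finset (ι × ι)).sup' Finset.univ_nonempty (fun p =>
        π1 p.1 * μ1 p.1 + (1 - π1 p.1) * s1
          - π0 p.2 * μ0 p.2 - (1 - π0 p.2) * s2)
      < s2 - s1 := by
  obtain ⟨e, j, hej⟩ := hexists
  have hinf := Finset.inf'_le (b := (e, j)) (fun p : ι × ι =>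
      π1 p.1 * μ1 p.1 + (1 - π1 p.1) * s2
        - π0 p.2 * μ0 p.2 - (1 - π0 p.2) * s1) (Finset.mem_univ _)
  have hsup := Finset.le_sup' (b := (e, j)) (fun p : ι × ι =>
      π1 p.1 * μ1 p.1 + (1 - π1 p.1) * s1
        - π0 p.2 * μ0 p.2 - (1 - π0 p.2) * s2) (Finset.mem_univ _)
  have key : (π1 e * μ1 e + (1 - π1 e) * s2 - π0 j * μ0 j - (1 - π0 j) * s1)
      - (π1 e * μ1 e + (1 - π1 e) * s1 - π0 j * μ0 j - (1 - π0 j) * s2)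
      < s2 - s1 := by nlinarith
  linarith
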